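/- Let f : ℝ → ℝ be a concave function such that f(0) = 0, f is differentiable at 0 with f'(0) ≠ 0, f is bounded above with sup f > 0, and there exists x* > 0 with f(x*) > 0. Let P and Q be probability measures on a measurable space X. Define D^Ralf(P, Q) = ⨆_C ∫ f(C(x) − ∫ C(y) dQ(y)) dP(x), where the supremum is taken over all bounded measurable functions C : X → ℝ. Then D^Ralf(P, Q) ≥ 0, and D^Ralf(P, Q) = 0 if and only if P = Q. -/

import Mathlib

open MeasureTheory

/-- The one-way relativistic average objective `D^Ralf` (supremum over bounded measurable
critics) is nonnegative, and vanishes iff `P = Q`. -/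
theorem DRalf_is_divergence
    {X : Type*} [MeasurableSpace X]
    (f : ℝ → ℝ)
    (hf : ∀ x y α : ℝ, 0 ≤ α → α ≤ 1 →
      α * f x + (1 - α) * f y ≤ f (α * x + (1 - α) * y))
    (hf0 : f 0 = 0)
    (hdiff : DifferentiableAt ℝ f 0)
    (hderiv : deriv f 0 ≠ 0)
    (hbdd : BddAbove (Set.range f))
    (hsup : 0 < ⨆ x, f x)
    (hpos : ∃ xs : ℝ, 0 < xs ∧ 0 < f xs)
    (P Q : Measure X) [IsProbabilityMeasure P] [IsProbabilityMeasure Q]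
    (DRalf : ℝ)
    (hDRalf : DRalf = ⨆ C : {C : X → ℝ // Measurable C ∧ ∃ M : ℝ, ∀ x, |C x| ≤ M},
      ∫ x, f (C.1 x - ∫ y, C.1 y ∂Q) ∂P) :
    0 ≤ DRalf ∧ (DRalf = 0 ↔ P = Q) := by
  -- f is concave and hence continuous
  have hconc : ConcaveOn ℝ Set.univ f := by
    refine ⟨convex_univ, fun x _ y _ a b ha hb hab => ?_⟩
    have hb1 : b = 1 - a := by linarith
    have := hf x y a ha (by linarith)
    simpa [hb1, smul_eq_mul] using this
  have hcont : Continuous f := by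
    rw [← continuousOn_univ]
    exact hconc.continuousOn isOpen_univ
  obtain ⟨M₀, hM₀⟩ := hbdd
  have hM₀' : ∀ x, f x ≤ M₀ := fun x => hM₀ ⟨x, rfl⟩
  -- bounded measurable functions are integrable
  have hintC : ∀ (μ : Measure X), IsProbabilityMeasure μ → ∀ (C : X → ℝ), Measurable C →
      (∃ M, ∀ x, |C x| ≤ M) → Integrable C μ := by
    rintro μ hμ C hC ⟨M, hM⟩
    exact (integrable_const M).mono' hC.aestronglyMeasurable
      (Filter.Eventually.of_forall fun x => by simpa [Real.norm_eq_abs] using hM x)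
  -- the integrand is always integrable
  have hintf : ∀ (C : X → ℝ), Measurable C → (∃ M, ∀ x, |C x| ≤ M) → ∀ c : ℝ,
      Integrable (fun x => f (C x - c)) P := by
    rintro C hC ⟨M, hM⟩ c
    obtain ⟨K, hK⟩ := (isCompact_Icc (a := -M - |c|) (b := M + |c|)).exists_bound_of_continuousOn
      hcont.continuousOn
    refine (integrable_const K).mono'
      ((hcont.measurable.comp (hC.sub measurable_const)).aestronglyMeasurable)
      (Filter.Eventually.of_forall fun x => ?_)
    have h1 := abs_le.mp (hM x)
    have h2 : c ≤ |c| := le_abs_self c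
    have h3 : -c ≤ |c| := neg_le_abs c
    exact hK _ ⟨by linarith [h1.1], by linarith [h1.2]⟩
  -- the terms of the supremum
  set T : {C : X → ℝ // Measurable C ∧ ∃ M : ℝ, ∀ x, |C x| ≤ M} → ℝ :=
    fun C => ∫ x, f (C.1 x - ∫ y, C.1 y ∂Q) ∂P with hT
  have hTbdd : BddAbove (Set.range T) := by
    refine ⟨M₀, ?_⟩
    rintro _ ⟨C, rfl⟩
    calc T C ≤ ∫ _, M₀ ∂P :=
          integral_mono (hintf C.1 C.2.1 C.2.2 _) (integrable_const M₀)
            (fun x => hM₀' _)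
      _ = M₀ := by simp
  have hzero : T ⟨fun _ => 0, measurable_const, 0, fun x => by simp⟩ = 0 := by
    simp [hT, hf0]
  have hnonneg : 0 ≤ DRalf := by
    rw [hDRalf]
    calc (0:ℝ) = T ⟨fun _ => 0, measurable_const, 0, fun x => by simp⟩ := hzero.symm
      _ ≤ ⨆ C, T C := le_ciSup hTbdd _
  refine ⟨hnonneg, ?_, ?_⟩
  · -- DRalf = 0 → P = Q
    intro h0
    by_contra hPQ
    obtain ⟨A, hA, hPA⟩ : ∃ A, MeasurableSet A ∧ P A ≠ Q A := by
      by_contra hc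
      push_neg at hc
      exact hPQ (Measure.ext hc)
    set p := (P A).toReal with hp
    set q := (Q A).toReal with hq
    have hpq : p ≠ q := by
      intro h
      exact hPA ((ENNReal.toReal_eq_toReal_iff' (measure_ne_top P A) (measure_ne_top Q A)).mp h)
    -- the scalar function g
    set g : ℝ → ℝ := fun t => p * f ((1 - q) * t) + (1 - p) * f ((-q) * t) with hg
    have hg0 : g 0 = 0 := by simp [hg, hf0]
    set d : ℝ := deriv f 0 * (p - q) with hd
    have hgderiv : HasDerivAt g d 0 := by
      have h1 : HasDerivAt (fun t : ℝ => f ((1 - q) * t)) (deriv f 0 * (1 - q)) 0 := by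
        have hinner : HasDerivAt (fun t : ℝ => (1 - q) * t) (1 - q) 0 := by
          simpa using (hasDerivAt_id (0:ℝ)).const_mul (1 - q)
        have hout : HasDerivAt f (deriv f 0) ((1 - q) * 0) := by
          simpa using hdiff.hasDerivAt
        exact hout.comp 0 hinner
      have h2 : HasDerivAt (fun t : ℝ => f ((-q) * t)) (deriv f 0 * (-q)) 0 := by
        have hinner : HasDerivAt (fun t : ℝ => (-q) * t) (-q) 0 := by
          simpa using (hasDerivAt_id (0:ℝ)).const_mul (-q)
        have hout : HasDerivAt f (deriv f 0) ((-q) * 0) := by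
          simpa using hdiff.hasDerivAt
        exact hout.comp 0 hinner
      have := ((h1.const_mul p).add (h2.const_mul (1 - p)))
      have hde : d = p * (deriv f 0 * (1 - q)) + (1 - p) * (deriv f 0 * -q) := by
        rw [hd]; ring
      rw [hde]
      exact this
    have hdne : d ≠ 0 := mul_ne_zero hderiv (sub_ne_zero.mpr hpq)
    -- find t with g t > 0
    have hslope := hasDerivAt_iff_tendsto_slope.mp hgderiv
    obtain ⟨t, ht0, hgt⟩ : ∃ t : ℝ, t ≠ 0 ∧ 0 < g t := by
      rcases hdne.lt_or_gt with hdneg | hdpos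
      · have hev : ∀ᶠ s in nhdsWithin (0:ℝ) {(0:ℝ)}ᶜ, slope g 0 s < 0 :=
          hslope.eventually (eventually_lt_nhds hdneg)
        have hev' : ∀ᶠ s in nhdsWithin (0:ℝ) (Set.Iio 0), slope g 0 s < 0 :=
          hev.filter_mono (nhdsWithin_mono 0 (fun s hs => ne_of_lt hs))
        obtain ⟨s, hs1, hs2⟩ := (hev'.and self_mem_nhdsWithin).exists
        refine ⟨s, ne_of_lt hs2, ?_⟩
        have : slope g 0 s = (g s - g 0) / s := by simp [slope_def_field]
        rw [this, hg0, sub_zero] at hs1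
        have hgs : g s = (g s / s) * s := (div_mul_cancel₀ _ (ne_of_lt hs2)).symm
        rw [hgs]
        exact mul_pos_of_neg_of_neg hs1 hs2
      · have hev : ∀ᶠ s in nhdsWithin (0:ℝ) {(0:ℝ)}ᶜ, 0 < slope g 0 s :=
          hslope.eventually (eventually_gt_nhds hdpos)
        have hev' : ∀ᶠ s in nhdsWithin (0:ℝ) (Set.Ioi 0), 0 < slope g 0 s :=
          hev.filter_mono (nhdsWithin_mono 0 (fun s hs => ne_of_gt hs))
        obtain ⟨s, hs1, hs2⟩ := (hev'.and self_mem_nhdsWithin).exists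
        refine ⟨s, ne_of_gt hs2, ?_⟩
        have : slope g 0 s = (g s - g 0) / s := by simp [slope_def_field]
        rw [this, hg0, sub_zero] at hs1
        rcases div_pos_iff.mp hs1 with ⟨h1, _⟩ | ⟨_, h2⟩
        · exact h1
        · exact absurd hs2 (not_lt.mpr (le_of_lt h2))
      -- the critic C = t·1_A
    set C : X → ℝ := A.indicator (fun _ => t) with hC
    have hCmeas : Measurable C := measurable_const.indicator hA
    have hCbdd : ∃ M : ℝ, ∀ x, |C x| ≤ M := by
      refine ⟨|t|, fun x => ?_⟩
      by_cases hx : x ∈ A <;> simp [hC, Set.indicator_apply, hx, abs_nonneg]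
    have hCint : ∫ y, C y ∂Q = q * t := by
      rw [hC, integral_indicator_const _ hA, smul_eq_mul, hq, measureReal_def]
    -- compute the term
    have hterm : T ⟨C, hCmeas, hCbdd⟩ = g t := by
      have heq : ∀ x, f (C x - ∫ y, C y ∂Q) =
          A.indicator (fun _ => f ((1 - q) * t) - f ((-q) * t)) x + f ((-q) * t) := by
        intro x
        rw [hCint]
        by_cases hx : x ∈ A
        · simp only [hC, Set.indicator_of_mem hx]
          ring_nf
        · simp only [hC, Set.indicator_of_notMem hx]
          ring_nf
      simp only [hT]
      rw [integral_congr_ae (Filter.Eventually.of_forall heq)]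
      rw [integral_add ((integrable_const _).indicator hA) (integrable_const _),
        integral_indicator_const _ hA, integral_const]
      simp only [measureReal_def, measure_univ, ENNReal.toReal_one, one_smul, smul_eq_mul, ← hp]
      ring
    have hle : g t ≤ DRalf := by
      rw [hDRalf, ← hterm]
      exact le_ciSup hTbdd _
    rw [h0] at hle
    linarith
  · -- P = Q → DRalf = 0
    intro hPQ
    subst hPQ
    haveI : Nonempty {C : X → ℝ // Measurable C ∧ ∃ M : ℝ, ∀ x, |C x| ≤ M} :=
      ⟨⟨fun _ => 0, measurable_const, 0, fun x => by simp⟩⟩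
    rw [hDRalf]
    refine le_antisymm (ciSup_le fun C => ?_) (by rw [← hDRalf]; exact hnonneg)
    obtain ⟨hCm, hCb⟩ := C.2
    set m := ∫ y, C.1 y ∂P with hm
    have hCint : Integrable C.1 P := hintC P inferInstance C.1 hCm hCb
    have hint1 : Integrable (fun x => C.1 x - m) P := hCint.sub (integrable_const m)
    have hint2 : Integrable (f ∘ fun x => C.1 x - m) P := hintf C.1 hCm hCb m
    have hJensen := hconc.le_map_integral hcont.continuousOn isClosed_univ
      (Filter.Eventually.of_forall fun x => Set.mem_univ _) hint1 hint2
    have hval : ∫ x, (C.1 x - m) ∂P = 0 := by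
      rw [integral_sub hCint (integrable_const m), integral_const]
      simp [hm]
    calc ∫ x, f (C.1 x - m) ∂P ≤ f (∫ x, (C.1 x - m) ∂P) := hJensen
      _ = 0 := by rw [hval, hf0]
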